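/- For a Fock-space construction F with natural transformation ε_A : FA → A, the annihilation operator a⁻ = (ε_A ⊗ id_{FA}) ∘ Δ̄_A satisfies (id_A ⊗ a⁻) ∘ a⁻ = (σ_{A,A} ⊗ id_{FA}) ∘ (id_A ⊗ a⁻) ∘ a⁻ : FA → A ⊗ A ⊗ FA, i.e., annihilation operators commute with each other. -/

import Mathlib

open CategoryTheory CategoryTheory.Limits CategoryTheory.MonoidalCategory ZeroObject

universe v u

variable (C : Type u) [Category.{v} C] [HasZeroObject C] [HasZeroMorphisms C]
  [HasBinaryBiproducts C] [MonoidalCategory C] [SymmetricCategory C]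

/-- The diagonal `Δ_A = ⟨id, id⟩ : A ⟶ A ⊞ A`. -/
noncomputable abbrev bdiag (A : C) : A ⟶ A ⊞ A := biprod.lift (𝟙 A) (𝟙 A)

/-- The codiagonal `∇_A = [id, id] : A ⊞ A ⟶ A`. -/
noncomputable abbrev bcodiag (A : C) : A ⊞ A ⟶ A := biprod.desc (𝟙 A) (𝟙 A)

variable {C}

/-- Convolution addition of morphisms induced by the biproduct structure:
`f + g = ∇_B ∘ (f ⊞ g) ∘ Δ_A`. -/
noncomputable def cadd {A B : C} (f g : A ⟶ B) : A ⟶ B :=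
  bdiag C A ≫ biprod.map f g ≫ bcodiag C B

variable (C)

/-- Compatibility of the biproduct structure and the symmetric monoidal
structure: the tensor product is bilinear for the biproduct (convolution)
enrichment.  A category carrying both compatible structures is a category of
spaces and linear maps. -/
class TensorCompatible : Prop where
  zero_tensorHom : ∀ {A B X Y : C} (f : X ⟶ Y), (0 : A ⟶ B) ⊗ₘ f = 0
  tensorHom_zero : ∀ {A B X Y : C} (f : X ⟶ Y), f ⊗ₘ (0 : A ⟶ B) = 0
  cadd_tensorHom : ∀ {A B X Y : C} (f g : A ⟶ B) (h : X ⟶ Y),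
    cadd f g ⊗ₘ h = cadd (f ⊗ₘ h) (g ⊗ₘ h)
  tensorHom_cadd : ∀ {A B X Y : C} (f g : A ⟶ B) (h : X ⟶ Y),
    h ⊗ₘ cadd f g = cadd (h ⊗ₘ f) (h ⊗ₘ g)

/-- A (bosonic) Fock-space construction on a category of spaces and linear
maps: a strong symmetric monoidal functor from the biproduct monoidal
structure `(0, ⊞)` to the symmetric monoidal structure `(𝟙_ C, ⊗)`. -/
structure FockConstruction where
  /-- The underlying functor. -/
  F : C ⥤ C
  /-- The unit comparison isomorphism `I ≅ F 0`. -/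
  φ₀ : 𝟙_ C ≅ F.obj (0 : C)
  /-- The tensor comparison isomorphism `F A ⊗ F B ≅ F (A ⊞ B)`. -/
  φ : ∀ A B : C, F.obj A ⊗ F.obj B ≅ F.obj (A ⊞ B)
  φ_natural : ∀ {A B A' B' : C} (f : A ⟶ A') (g : B ⟶ B'),
    (F.map f ⊗ₘ F.map g) ≫ (φ A' B').hom = (φ A B).hom ≫ F.map (biprod.map f g)
  left_unitality : ∀ A : C,
    (φ₀.hom ⊗ₘ 𝟙 (F.obj A)) ≫ (φ 0 A).hom ≫ F.map (biprod.desc 0 (𝟙 A)) =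
      (λ_ (F.obj A)).hom
  right_unitality : ∀ A : C,
    (𝟙 (F.obj A) ⊗ₘ φ₀.hom) ≫ (φ A 0).hom ≫ F.map (biprod.desc (𝟙 A) 0) =
      (ρ_ (F.obj A)).hom
  associativity : ∀ A B D : C,
    ((φ A B).hom ⊗ₘ 𝟙 (F.obj D)) ≫ (φ (A ⊞ B) D).hom ≫
        F.map (biprod.associator A B D).hom =
      (α_ (F.obj A) (F.obj B) (F.obj D)).hom ≫
        (𝟙 (F.obj A) ⊗ₘ (φ B D).hom) ≫ (φ A (B ⊞ D)).hom
  braided : ∀ A B : C,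
    (φ A B).hom ≫ F.map (biprod.braiding A B).hom =
      (β_ (F.obj A) (F.obj B)).hom ≫ (φ B A).hom

namespace FockConstruction

variable {C} (Φ : FockConstruction C)

/-- The unit `η̄_A : I ⟶ F A` of the Fock bialgebra. -/
noncomputable def unit (A : C) : 𝟙_ C ⟶ Φ.F.obj A :=
  Φ.φ₀.hom ≫ Φ.F.map (0 : (0 : C) ⟶ A)

/-- The multiplication `∇̄_A : F A ⊗ F A ⟶ F A` of the Fock bialgebra. -/
noncomputable def mult (A : C) : Φ.F.obj A ⊗ Φ.F.obj A ⟶ Φ.F.obj A :=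
  (Φ.φ A A).hom ≫ Φ.F.map (bcodiag C A)

/-- The counit `ε̄_A : F A ⟶ I` of the Fock bialgebra. -/
noncomputable def counit (A : C) : Φ.F.obj A ⟶ 𝟙_ C :=
  Φ.F.map (0 : A ⟶ (0 : C)) ≫ Φ.φ₀.inv

/-- The comultiplication `Δ̄_A : F A ⟶ F A ⊗ F A` of the Fock bialgebra. -/
noncomputable def comult (A : C) : Φ.F.obj A ⟶ Φ.F.obj A ⊗ Φ.F.obj A :=
  Φ.F.map (bdiag C A) ≫ (Φ.φ A A).inv

/-- The creation operator `a⁺ = ∇̄_A ∘ (η_A ⊗ id) : A ⊗ F A ⟶ F A` associated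
to a natural transformation `η : Id ⟶ F`. -/
noncomputable def creation (η : 𝟭 C ⟶ Φ.F) (A : C) : A ⊗ Φ.F.obj A ⟶ Φ.F.obj A :=
  (η.app A ⊗ₘ 𝟙 (Φ.F.obj A)) ≫ Φ.mult A

/-- The annihilation operator `a⁻ = (ε_A ⊗ id) ∘ Δ̄_A : F A ⟶ A ⊗ F A`
associated to a natural transformation `ε : F ⟶ Id`. -/
noncomputable def annihilation (ε : Φ.F ⟶ 𝟭 C) (A : C) :
    Φ.F.obj A ⟶ A ⊗ Φ.F.obj A :=
  Φ.comult A ≫ (ε.app A ⊗ₘ 𝟙 (Φ.F.obj A))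

end FockConstruction



section AuxLemmas

set_option linter.unusedSectionVars false

variable {C : Type u} [Category.{v} C] [HasZeroObject C] [HasZeroMorphisms C]
  [HasBinaryBiproducts C] [MonoidalCategory C] [SymmetricCategory C]

lemma bdiag_braiding (A : C) :
    bdiag C A ≫ (biprod.braiding A A).hom = bdiag C A := by
  ext <;> simp [biprod.braiding]

lemma bdiag_coassoc (A : C) :
    bdiag C A ≫ biprod.map (𝟙 A) (bdiag C A) =
      (bdiag C A ≫ biprod.map (bdiag C A) (𝟙 A)) ≫ (biprod.associator A A A).hom := by
  ext <;> simp [biprod.associator]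

namespace FockConstruction

variable (Φ : FockConstruction C)

lemma phi_inv_natural {A B A' B' : C} (f : A ⟶ A') (g : B ⟶ B') :
    (Φ.φ A B).inv ≫ (Φ.F.map f ⊗ₘ Φ.F.map g) =
      Φ.F.map (biprod.map f g) ≫ (Φ.φ A' B').inv := by
  rw [Iso.inv_comp_eq, ← Category.assoc, ← Φ.φ_natural, Category.assoc,
    Iso.hom_inv_id, Category.comp_id]

lemma phi_inv_natural_left {A B B' : C} (g : B ⟶ B') :
    (Φ.φ A B).inv ≫ (Φ.F.obj A ◁ Φ.F.map g) =
      Φ.F.map (biprod.map (𝟙 A) g) ≫ (Φ.φ A B').inv := by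
  have h := Φ.phi_inv_natural (𝟙 A) g
  rwa [Φ.F.map_id, MonoidalCategory.id_tensorHom] at h

lemma phi_inv_natural_right {A A' B : C} (f : A ⟶ A') :
    (Φ.φ A B).inv ≫ (Φ.F.map f ▷ Φ.F.obj B) =
      Φ.F.map (biprod.map f (𝟙 B)) ≫ (Φ.φ A' B).inv := by
  have h := Φ.phi_inv_natural f (𝟙 B)
  rwa [Φ.F.map_id, MonoidalCategory.tensorHom_id] at h

lemma comult_braiding (A : C) :
    Φ.comult A ≫ (β_ (Φ.F.obj A) (Φ.F.obj A)).hom = Φ.comult A := by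
  have h : (Φ.φ A A).inv ≫ (β_ (Φ.F.obj A) (Φ.F.obj A)).hom =
      Φ.F.map (biprod.braiding A A).hom ≫ (Φ.φ A A).inv := by
    rw [Iso.inv_comp_eq, ← Category.assoc, Φ.braided, Category.assoc,
      Iso.hom_inv_id, Category.comp_id]
  simp only [comult, Category.assoc]
  rw [h, ← Category.assoc, ← Φ.F.map_comp, bdiag_braiding]

lemma hom_assoc_whisker (A : C) :
    (Φ.φ (A ⊞ A) A).hom ≫ Φ.F.map (biprod.associator A A A).hom =
      ((Φ.φ A A).inv ▷ Φ.F.obj A) ≫ (α_ (Φ.F.obj A) (Φ.F.obj A) (Φ.F.obj A)).hom ≫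
        (Φ.F.obj A ◁ (Φ.φ A A).hom) ≫ (Φ.φ A (A ⊞ A)).hom := by
  have h := Φ.associativity A A A
  simp only [MonoidalCategory.id_tensorHom, MonoidalCategory.tensorHom_id,
    Category.assoc] at h
  rw [← cancel_epi ((Φ.φ A A).hom ▷ Φ.F.obj A)]
  rw [h]
  rw [← Category.assoc ((Φ.φ A A).hom ▷ Φ.F.obj A),
    ← MonoidalCategory.comp_whiskerRight, Iso.hom_inv_id,
    MonoidalCategory.id_whiskerRight, Category.id_comp]

lemma phi_inv_assoc (A : C) :
    Φ.F.map (biprod.associator A A A).hom ≫ (Φ.φ A (A ⊞ A)).inv ≫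
        (Φ.F.obj A ◁ (Φ.φ A A).inv) ≫
        (α_ (Φ.F.obj A) (Φ.F.obj A) (Φ.F.obj A)).inv =
      (Φ.φ (A ⊞ A) A).inv ≫ ((Φ.φ A A).inv ▷ Φ.F.obj A) := by
  have h : Φ.F.map (biprod.associator A A A).hom =
      (Φ.φ (A ⊞ A) A).inv ≫ ((Φ.φ A A).inv ▷ Φ.F.obj A) ≫
        (α_ (Φ.F.obj A) (Φ.F.obj A) (Φ.F.obj A)).hom ≫
        (Φ.F.obj A ◁ (Φ.φ A A).hom) ≫ (Φ.φ A (A ⊞ A)).hom := by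
    rw [Iso.eq_inv_comp, Φ.hom_assoc_whisker A]
  rw [h]
  simp only [Category.assoc, Iso.hom_inv_id_assoc]
  rw [← Category.assoc (Φ.F.obj A ◁ (Φ.φ A A).hom),
    ← MonoidalCategory.whiskerLeft_comp, Iso.hom_inv_id,
    MonoidalCategory.whiskerLeft_id, Category.id_comp, Iso.hom_inv_id,
    Category.comp_id]

lemma comult_coassoc (A : C) :
    Φ.comult A ≫ (𝟙 (Φ.F.obj A) ⊗ₘ Φ.comult A) ≫
        (α_ (Φ.F.obj A) (Φ.F.obj A) (Φ.F.obj A)).inv =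
      Φ.comult A ≫ (Φ.comult A ⊗ₘ 𝟙 (Φ.F.obj A)) := by
  simp only [comult, MonoidalCategory.id_tensorHom, MonoidalCategory.tensorHom_id,
    MonoidalCategory.whiskerLeft_comp, MonoidalCategory.comp_whiskerRight,
    Category.assoc]
  rw [← Category.assoc ((Φ.φ A A).inv) (Φ.F.obj A ◁ Φ.F.map (bdiag C A)),
    Φ.phi_inv_natural_left,
    ← Category.assoc ((Φ.φ A A).inv) (Φ.F.map (bdiag C A) ▷ Φ.F.obj A),
    Φ.phi_inv_natural_right]
  slice_lhs 1 2 => rw [← Φ.F.map_comp, bdiag_coassoc, Φ.F.map_comp, Φ.F.map_comp]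
  simp only [Category.assoc]
  rw [Φ.phi_inv_assoc A]

set_option maxHeartbeats 1000000 in
lemma ann_comm_aux (A : C) (e : Φ.F.obj A ⟶ A) :
    (Φ.comult A ≫ (e ⊗ₘ 𝟙 (Φ.F.obj A))) ≫
        (𝟙 A ⊗ₘ (Φ.comult A ≫ (e ⊗ₘ 𝟙 (Φ.F.obj A)))) =
      (Φ.comult A ≫ (e ⊗ₘ 𝟙 (Φ.F.obj A))) ≫
        (𝟙 A ⊗ₘ (Φ.comult A ≫ (e ⊗ₘ 𝟙 (Φ.F.obj A)))) ≫
        (α_ A A (Φ.F.obj A)).inv ≫ ((β_ A A).hom ⊗ₘ 𝟙 (Φ.F.obj A)) ≫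
        (α_ A A (Φ.F.obj A)).hom := by
  have step1 : (e ⊗ₘ 𝟙 (Φ.F.obj A)) ≫ (𝟙 A ⊗ₘ (Φ.comult A ≫ (e ⊗ₘ 𝟙 (Φ.F.obj A)))) =
      (𝟙 (Φ.F.obj A) ⊗ₘ Φ.comult A) ≫ (e ⊗ₘ (e ⊗ₘ 𝟙 (Φ.F.obj A))) := by
    simp only [MonoidalCategory.tensorHom_comp_tensorHom, Category.comp_id, Category.id_comp]
  have hX : (Φ.comult A ≫ (e ⊗ₘ 𝟙 (Φ.F.obj A))) ≫
      (𝟙 A ⊗ₘ (Φ.comult A ≫ (e ⊗ₘ 𝟙 (Φ.F.obj A)))) ≫ (α_ A A (Φ.F.obj A)).inv =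
      Φ.comult A ≫ ((Φ.comult A ≫ (e ⊗ₘ e)) ⊗ₘ 𝟙 (Φ.F.obj A)) := by
    calc (Φ.comult A ≫ (e ⊗ₘ 𝟙 (Φ.F.obj A))) ≫
        (𝟙 A ⊗ₘ (Φ.comult A ≫ (e ⊗ₘ 𝟙 (Φ.F.obj A)))) ≫ (α_ A A (Φ.F.obj A)).inv
        = Φ.comult A ≫ ((e ⊗ₘ 𝟙 (Φ.F.obj A)) ≫
            (𝟙 A ⊗ₘ (Φ.comult A ≫ (e ⊗ₘ 𝟙 (Φ.F.obj A))))) ≫ (α_ A A (Φ.F.obj A)).inv := by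
          simp only [Category.assoc]
      _ = Φ.comult A ≫ (𝟙 (Φ.F.obj A) ⊗ₘ Φ.comult A) ≫
            ((e ⊗ₘ (e ⊗ₘ 𝟙 (Φ.F.obj A))) ≫ (α_ A A (Φ.F.obj A)).inv) := by
          rw [step1]; simp only [Category.assoc]
      _ = (Φ.comult A ≫ (𝟙 (Φ.F.obj A) ⊗ₘ Φ.comult A) ≫ (α_ (Φ.F.obj A) (Φ.F.obj A) (Φ.F.obj A)).inv) ≫
            ((e ⊗ₘ e) ⊗ₘ 𝟙 (Φ.F.obj A)) := by
          rw [MonoidalCategory.associator_inv_naturality]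
          simp only [Category.assoc]
      _ = (Φ.comult A ≫ (Φ.comult A ⊗ₘ 𝟙 (Φ.F.obj A))) ≫ ((e ⊗ₘ e) ⊗ₘ 𝟙 (Φ.F.obj A)) := by
          rw [Φ.comult_coassoc A]
      _ = Φ.comult A ≫ ((Φ.comult A ≫ (e ⊗ₘ e)) ⊗ₘ 𝟙 (Φ.F.obj A)) := by
          rw [Category.assoc, MonoidalCategory.tensorHom_comp_tensorHom, Category.comp_id]
  have hsym : Φ.comult A ≫ ((e ⊗ₘ e) ≫ (β_ A A).hom) = Φ.comult A ≫ (e ⊗ₘ e) := by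
    rw [BraidedCategory.braiding_naturality, ← Category.assoc, Φ.comult_braiding A]
  have key : (Φ.comult A ≫ (e ⊗ₘ 𝟙 (Φ.F.obj A))) ≫
      (𝟙 A ⊗ₘ (Φ.comult A ≫ (e ⊗ₘ 𝟙 (Φ.F.obj A)))) ≫ (α_ A A (Φ.F.obj A)).inv ≫
        ((β_ A A).hom ⊗ₘ 𝟙 (Φ.F.obj A)) =
      (Φ.comult A ≫ (e ⊗ₘ 𝟙 (Φ.F.obj A))) ≫
      (𝟙 A ⊗ₘ (Φ.comult A ≫ (e ⊗ₘ 𝟙 (Φ.F.obj A)))) ≫ (α_ A A (Φ.F.obj A)).inv := by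
    rw [← Category.assoc _ (α_ A A (Φ.F.obj A)).inv, ← Category.assoc, hX,
      Category.assoc, MonoidalCategory.tensorHom_comp_tensorHom, Category.comp_id,
      Category.assoc, hsym]
  calc (Φ.comult A ≫ (e ⊗ₘ 𝟙 (Φ.F.obj A))) ≫ (𝟙 A ⊗ₘ (Φ.comult A ≫ (e ⊗ₘ 𝟙 (Φ.F.obj A))))
      = ((Φ.comult A ≫ (e ⊗ₘ 𝟙 (Φ.F.obj A))) ≫
          (𝟙 A ⊗ₘ (Φ.comult A ≫ (e ⊗ₘ 𝟙 (Φ.F.obj A)))) ≫ (α_ A A (Φ.F.obj A)).inv ≫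
          ((β_ A A).hom ⊗ₘ 𝟙 (Φ.F.obj A))) ≫ (α_ A A (Φ.F.obj A)).hom := by
        rw [key]; simp only [Category.assoc, Iso.inv_hom_id, Category.comp_id]
    _ = _ := by simp only [Category.assoc]

end FockConstruction

end AuxLemmas

/-- Annihilation operators commute with each other:
`(id ⊗ a⁻) ∘ a⁻ = (σ_{A,A} ⊗ id) ∘ (id ⊗ a⁻) ∘ a⁻` (associators inserted). -/
theorem FockConstruction.annihilation_commute {C : Type u} [Category.{v} C]
    [HasZeroObject C] [HasZeroMorphisms C] [HasBinaryBiproducts C]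
    [MonoidalCategory C] [SymmetricCategory C] [TensorCompatible C]
    (Φ : FockConstruction C) (ε : Φ.F ⟶ 𝟭 C) (A : C) :
    Φ.annihilation ε A ≫ (𝟙 A ⊗ₘ Φ.annihilation ε A) =
      Φ.annihilation ε A ≫ (𝟙 A ⊗ₘ Φ.annihilation ε A) ≫
        (α_ A A (Φ.F.obj A)).inv ≫ ((β_ A A).hom ⊗ₘ 𝟙 (Φ.F.obj A)) ≫
        (α_ A A (Φ.F.obj A)).hom := by
  simpa only [FockConstruction.annihilation] using Φ.ann_comm_aux A (ε.app A)
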